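/- (Improved convergence condition for NST+HT+FB.) Suppose y = Ax (noiseless) with x s-sparse, and the RIP constant δ_{2s} of A and the preconditioned RIP constant γ_{3s} of A satisfy δ_{2s}² + 2γ_{3s}² < 1. Then the sequence {u^k} of NST+HT+FB iterates satisfies ‖x - u^k‖₂ ≤ ρ^k ‖x - μ^0‖₂ with ρ = √(2γ_{3s}²/(1-δ_{2s}²)) < 1; in particular u^k → x. -/

import Mathlib

open Matrix Finset Real MeasureTheory ProbabilityTheory
open scoped BigOperators

noncomputable section

/-- squared Euclidean norm -/
def nsq {n : ℕ} (v : Fin n → ℝ) : ℝ := ∑ i, v i ^ 2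

/-- Euclidean norm -/
def nrm {n : ℕ} (v : Fin n → ℝ) : ℝ := Real.sqrt (∑ i, v i ^ 2)

open Classical in
/-- support of a vector, as a finset -/
def suppF {n : ℕ} (x : Fin n → ℝ) : Finset (Fin n) :=
  Finset.univ.filter (fun i => x i ≠ 0)

/-- `x` is `s`-sparse -/
def Sparse {n : ℕ} (s : ℕ) (x : Fin n → ℝ) : Prop := (suppF x).card ≤ s

/-- `δ` is a restricted isometry constant of order `t` for `A`:
`(1-δ)‖x‖² ≤ ‖Ax‖² ≤ (1+δ)‖x‖²` for all `t`-sparse `x`. -/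
def IsRIP {M N : ℕ} (A : Matrix (Fin M) (Fin N) ℝ) (t : ℕ) (δ : ℝ) : Prop :=
  ∀ x : Fin N → ℝ, Sparse t x →
    (1 - δ) * nsq x ≤ nsq (A.mulVec x) ∧ nsq (A.mulVec x) ≤ (1 + δ) * nsq x

/-- restriction of a vector to an index set (zeroing entries outside it) -/
def restr {n : ℕ} (T : Finset (Fin n)) (x : Fin n → ℝ) : Fin n → ℝ :=
  fun i => if i ∈ T then x i else 0

/-- submatrix of the columns of `A` indexed by `T` -/
def colSub {M N : ℕ} (A : Matrix (Fin M) (Fin N) ℝ) (T : Finset (Fin N)) :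
    Matrix (Fin M) T ℝ :=
  fun i j => A i j.val

/-- the feedback step: `μ'_T = x_T + (A_Tᵀ A_T)⁻¹ A_Tᵀ A_{Tᶜ} x_{Tᶜ}`, `μ'_{Tᶜ} = 0`. -/
def feedback {M N : ℕ} (A : Matrix (Fin M) (Fin N) ℝ) (T : Finset (Fin N))
    (x : Fin N → ℝ) : Fin N → ℝ :=
  fun i => if h : i ∈ T then
    x i + ((((colSub A T)ᵀ * colSub A T)⁻¹ * (colSub A T)ᵀ).mulVec
      (A.mulVec (restr Tᶜ x))) ⟨i, h⟩
  else 0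

/-- `hatAbs x k` is the `k`-th largest absolute entry of `x` (1-based index). -/
def hatAbs {n : ℕ} (x : Fin n → ℝ) (k : ℕ) : ℝ :=
  if h : k - 1 < n then |x (Tuple.sort (fun i => -|x i|) ⟨k - 1, h⟩)| else 0

/-- `T` contains the indices of the `p` largest absolute entries of `x`. -/
def containsTop {n : ℕ} (x : Fin n → ℝ) (p : ℕ) (T : Finset (Fin n)) : Prop :=
  ∀ j : Fin n, (j : ℕ) < p → Tuple.sort (fun i => -|x i|) j ∈ T

/-- The NST+HT+FB algorithm: `T k` is the set of the `s` largest absolute entries of the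
feasible iterate `x^k`, `μ^k` is the thresholding-plus-feedback of `x^k` on `T k`, and
`x^{k+1} = μ^k + Aᵀ(AAᵀ)⁻¹(y - Aμ^k)` is the null space tuning step. -/
def NSTSpec {M N : ℕ} (A : Matrix (Fin M) (Fin N) ℝ) (y : Fin M → ℝ) (s : ℕ)
    (T : ℕ → Finset (Fin N)) (xs μ : ℕ → Fin N → ℝ) : Prop :=
  (∀ k, A.mulVec (xs k) = y) ∧
  (∀ k, (T k).card = s) ∧
  (∀ k, ∀ i ∈ T k, ∀ j ∉ T k, |xs k j| ≤ |xs k i|) ∧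
  (∀ k, μ k = feedback A (T k) (xs k)) ∧
  (∀ k, xs (k + 1) = μ k + (Aᵀ * (A * Aᵀ)⁻¹).mulVec (y - A.mulVec (μ k)))

/-- The adaptive AdptNST+HT+FB algorithm: identical to NST+HT+FB except that at step `k`
the index set `T k` consists of the `k` largest absolute entries of `x^k`. -/
def AdptSpec {M N : ℕ} (A : Matrix (Fin M) (Fin N) ℝ) (y : Fin M → ℝ)
    (T : ℕ → Finset (Fin N)) (xs μ : ℕ → Fin N → ℝ) : Prop :=
  (∀ k, A.mulVec (xs k) = y) ∧
  (∀ k, (T k).card = k) ∧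
  (∀ k, ∀ i ∈ T k, ∀ j ∉ T k, |xs k j| ≤ |xs k i|) ∧
  (∀ k, μ k = feedback A (T k) (xs k)) ∧
  (∀ k, xs (k + 1) = μ k + (Aᵀ * (A * Aᵀ)⁻¹).mulVec (y - A.mulVec (μ k)))

open scoped ComplexOrder in
/-- The positive semidefinite square root of a positive semidefinite matrix
(the former `Matrix.PosSemidef.sqrt`, removed from Mathlib). -/
def psdSqrt {n : Type*} [Fintype n] [DecidableEq n] {𝕜 : Type*} [RCLike 𝕜]
    {A : Matrix n n 𝕜} (hA : A.PosSemidef) : Matrix n n 𝕜 :=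
  (hA.1.eigenvectorUnitary : Matrix n n 𝕜) *
    diagonal ((↑) ∘ Real.sqrt ∘ hA.1.eigenvalues : n → 𝕜) *
    (star hA.1.eigenvectorUnitary : Matrix n n 𝕜)

lemma psdSqrt_mul_self {M : ℕ} {A : Matrix (Fin M) (Fin M) ℝ} (hA : A.PosSemidef) :
    psdSqrt hA * psdSqrt hA = A := by
  unfold psdSqrt
  conv_rhs => rw [hA.1.spectral_theorem, Unitary.conjStarAlgAut_apply]
  simp only [Matrix.mul_assoc]
  rw [← Matrix.mul_assoc (star _) _ _, Unitary.coe_star_mul_self, Matrix.one_mul,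
    ← Matrix.mul_assoc (diagonal _) (diagonal _), diagonal_mul_diagonal]
  congr 3
  funext i
  simp [Real.mul_self_sqrt (hA.eigenvalues_nonneg i)]

lemma psdSqrt_transpose {M : ℕ} {A : Matrix (Fin M) (Fin M) ℝ} (hA : A.PosSemidef) :
    (psdSqrt hA)ᵀ = psdSqrt hA := by
  unfold psdSqrt
  rw [Matrix.transpose_mul, Matrix.transpose_mul, diagonal_transpose,
    Matrix.star_eq_conjTranspose, Matrix.conjTranspose_eq_transpose_of_trivial,
    Matrix.transpose_transpose, Matrix.mul_assoc]


lemma restr_add_compl {n : ℕ} (T : Finset (Fin n)) (x : Fin n → ℝ) :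
    restr T x + restr Tᶜ x = x := by
  funext i; by_cases h : i ∈ T <;> simp [restr, h]
/- ===== auxiliary lemmas ===== -/

lemma nsq_eq_dot {n : ℕ} (v : Fin n → ℝ) : nsq v = v ⬝ᵥ v := by
  simp [nsq, dotProduct, sq]

lemma nsq_nonneg {n : ℕ} (v : Fin n → ℝ) : 0 ≤ nsq v :=
  Finset.sum_nonneg fun _ _ => sq_nonneg _

lemma nsq_eq_zero {n : ℕ} {v : Fin n → ℝ} (h : nsq v = 0) : v = 0 := by
  funext i
  have := (Finset.sum_eq_zero_iff_of_nonneg (fun j _ => sq_nonneg (v j))).mp h i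
    (Finset.mem_univ i)
  exact pow_eq_zero_iff (by norm_num) |>.mp this

lemma dot_tA {m n : Type*} [Fintype m] [Fintype n] (A : Matrix m n ℝ) (u : n → ℝ)
    (w : m → ℝ) : u ⬝ᵥ (Aᵀ *ᵥ w) = (A *ᵥ u) ⬝ᵥ w := by
  rw [Matrix.dotProduct_mulVec, Matrix.vecMul_transpose]

lemma nsq_sub' {n : ℕ} (a b : Fin n → ℝ) :
    nsq (a - b) = nsq a - 2 * (a ⬝ᵥ b) + nsq b := by
  simp only [nsq, dotProduct, Pi.sub_apply, Finset.mul_sum, ← Finset.sum_add_distrib,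
    ← Finset.sum_sub_distrib]
  congr 1; ext i; ring

lemma nsq_add' {n : ℕ} (a b : Fin n → ℝ) :
    nsq (a + b) = nsq a + 2 * (a ⬝ᵥ b) + nsq b := by
  simp only [nsq, dotProduct, Pi.add_apply, Finset.mul_sum, ← Finset.sum_add_distrib]
  congr 1; ext i; ring

lemma nsq_smul {n : ℕ} (c : ℝ) (v : Fin n → ℝ) : nsq (c • v) = c ^ 2 * nsq v := by
  simp only [nsq, Pi.smul_apply, smul_eq_mul, Finset.mul_sum, mul_pow]

lemma cs_ineq {n : ℕ} (u v : Fin n → ℝ) : (u ⬝ᵥ v) ^ 2 ≤ nsq u * nsq v := by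
  simpa [nsq, dotProduct] using Finset.sum_mul_sq_le_sq_mul_sq Finset.univ u v

lemma proj_def {m n : ℕ} (B : Matrix (Fin m) (Fin n) ℝ) (hB : B * Bᵀ = 1)
    (z : Fin n → ℝ) :
    nsq (z - (Bᵀ * B) *ᵥ z) = nsq z - nsq (B *ᵥ z) := by
  have h1 : z ⬝ᵥ ((Bᵀ * B) *ᵥ z) = (B *ᵥ z) ⬝ᵥ (B *ᵥ z) := by
    rw [← Matrix.mulVec_mulVec, dot_tA]
  have h3 : B *ᵥ (Bᵀ *ᵥ (B *ᵥ z)) = B *ᵥ z := by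
    rw [Matrix.mulVec_mulVec, hB, Matrix.one_mulVec]
  have h2 : nsq ((Bᵀ * B) *ᵥ z) = nsq (B *ᵥ z) := by
    rw [nsq_eq_dot, ← Matrix.mulVec_mulVec, dot_tA, h3, ← nsq_eq_dot]
  rw [nsq_sub', h1, h2, nsq_eq_dot, nsq_eq_dot]; ring

lemma nsq_BtB_le {m n : ℕ} (B : Matrix (Fin m) (Fin n) ℝ) (hB : B * Bᵀ = 1)
    (z : Fin n → ℝ) : nsq (B *ᵥ z) ≤ nsq z := by
  have := proj_def B hB z
  nlinarith [nsq_nonneg (z - (Bᵀ * B) *ᵥ z)]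

lemma QGQ {M : ℕ} (G : Matrix (Fin M) (Fin M) ℝ) (hG : G.PosDef) :
    psdSqrt hG.inv.posSemidef * G * psdSqrt hG.inv.posSemidef = 1 := by
  set Q := psdSqrt hG.inv.posSemidef with hQdef
  have hQQ : Q * Q = G⁻¹ := psdSqrt_mul_self hG.inv.posSemidef
  have hdetG : IsUnit G.det := hG.det_pos.ne'.isUnit
  have hdetQ : IsUnit Q.det := by
    have h1 : Q.det * Q.det = G⁻¹.det := by rw [← Matrix.det_mul, hQQ]
    have h2 : IsUnit (G⁻¹.det) := hG.inv.det_pos.ne'.isUnit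
    rw [← h1] at h2
    exact isUnit_of_mul_isUnit_left h2
  have hGinv : G = (G⁻¹)⁻¹ := (Matrix.nonsing_inv_nonsing_inv G hdetG).symm
  calc Q * G * Q = Q * (Q * Q)⁻¹ * Q := by rw [hQQ, ← hGinv]
    _ = Q * (Q⁻¹ * Q⁻¹) * Q := by rw [Matrix.mul_inv_rev]
    _ = 1 := by
        rw [Matrix.mul_assoc, Matrix.mul_assoc, Matrix.nonsing_inv_mul _ hdetQ,
          Matrix.mul_one, Matrix.mul_nonsing_inv _ hdetQ]

lemma Qsymm {M : ℕ} (G : Matrix (Fin M) (Fin M) ℝ) (hG : G.PosDef) :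
    (psdSqrt hG.inv.posSemidef)ᵀ = psdSqrt hG.inv.posSemidef := by
  exact psdSqrt_transpose _

lemma suppF_zero {n : ℕ} {x : Fin n → ℝ} {i : Fin n} (h : i ∉ suppF x) : x i = 0 := by
  by_contra hc; exact h (by simp [suppF, hc])

lemma sparse_of_subset {n t : ℕ} {x : Fin n → ℝ} {U : Finset (Fin n)}
    (h : ∀ i, x i ≠ 0 → i ∈ U) (hU : U.card ≤ t) : Sparse t x := by
  refine le_trans (Finset.card_le_card ?_) hU
  intro i hi
  simp only [suppF, Finset.mem_filter] at hi
  exact h i hi.2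

set_option maxHeartbeats 1000000 in
/-- hard thresholding comparison -/
lemma ht_lemma {n : ℕ} (xk : Fin n → ℝ) (T S : Finset (Fin n))
    (hcard : S.card ≤ T.card)
    (hdom : ∀ i ∈ T, ∀ j ∉ T, |xk j| ≤ |xk i|) :
    ∑ j ∈ S \ T, xk j ^ 2 ≤ ∑ i ∈ T \ S, xk i ^ 2 := by
  have hc : (S \ T).card ≤ (T \ S).card := by
    have h1 := Finset.card_sdiff_add_card_inter S T
    have h2 := Finset.card_sdiff_add_card_inter T S
    have h3 : (S ∩ T).card = (T ∩ S).card := by rw [Finset.inter_comm]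
    omega
  obtain ⟨T', hT'sub, hT'card⟩ := Finset.exists_subset_card_eq hc
  have hcards : Fintype.card ↥(S \ T) = Fintype.card ↥T' := by
    simp only [Fintype.card_coe]; rw [hT'card]
  classical
  let e : ↥(S \ T) ≃ ↥T' := Fintype.equivOfCardEq hcards
  let g : Fin n → Fin n := fun j => if h : j ∈ S \ T then (e ⟨j, h⟩ : Fin n) else j
  have hg_mem : ∀ j ∈ S \ T, g j ∈ T' := by
    intro j hj; simp only [g, dif_pos hj]; exact (e ⟨j, hj⟩).2
  have hg_inj : ∀ j₁ ∈ S \ T, ∀ j₂ ∈ S \ T, g j₁ = g j₂ → j₁ = j₂ := by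
    intro j₁ h₁ j₂ h₂ hgj
    simp only [g, dif_pos h₁, dif_pos h₂] at hgj
    have := e.injective (Subtype.ext hgj)
    exact Subtype.mk_eq_mk.mp this
  calc ∑ j ∈ S \ T, xk j ^ 2 ≤ ∑ j ∈ S \ T, xk (g j) ^ 2 := by
        refine Finset.sum_le_sum ?_
        intro j hj
        have hjT : j ∉ T := (Finset.mem_sdiff.mp hj).2
        have hgT : g j ∈ T := (Finset.mem_sdiff.mp (hT'sub (hg_mem j hj))).1
        have h := hdom (g j) hgT j hjT
        have h2 : xk j ^ 2 = |xk j| ^ 2 := (sq_abs _).symm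
        have h3 : xk (g j) ^ 2 = |xk (g j)| ^ 2 := (sq_abs _).symm
        rw [h2, h3]
        exact pow_le_pow_left₀ (abs_nonneg _) h 2
    _ = ∑ i ∈ (S \ T).image g, xk i ^ 2 :=
        (Finset.sum_image (f := fun i => xk i ^ 2) hg_inj).symm
    _ ≤ ∑ i ∈ T \ S, xk i ^ 2 := by
        refine Finset.sum_le_sum_of_subset_of_nonneg ?_ (fun _ _ _ => sq_nonneg _)
        intro i hi
        obtain ⟨j, hj, rfl⟩ := Finset.mem_image.mp hi
        exact hT'sub (hg_mem j hj)

/-- extension of a T-indexed vector by zero -/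
def extT {N : ℕ} (T : Finset (Fin N)) (w : ↥T → ℝ) : Fin N → ℝ :=
  fun i => if h : i ∈ T then w ⟨i, h⟩ else 0

lemma mulVec_extT {M N : ℕ} (A : Matrix (Fin M) (Fin N) ℝ) (T : Finset (Fin N))
    (w : ↥T → ℝ) : A *ᵥ (extT T w) = (colSub A T) *ᵥ w := by
  funext i
  show ∑ j, A i j * extT T w j = ∑ j : ↥T, colSub A T i j * w j
  conv_rhs => rw [Finset.univ_eq_attach]
  rw [← Finset.sum_subset (Finset.subset_univ T)
    (fun j _ hj => by simp [extT, hj])]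
  rw [← Finset.sum_attach T (fun j => A i j * extT T w j)]
  refine Finset.sum_congr rfl ?_
  intro j _
  simp [extT, colSub]

lemma colSub_t_apply {M N : ℕ} (A : Matrix (Fin M) (Fin N) ℝ) (T : Finset (Fin N))
    (r : Fin M → ℝ) (j : ↥T) : ((colSub A T)ᵀ *ᵥ r) j = (Aᵀ *ᵥ r) ↑j := by
  simp [Matrix.mulVec, dotProduct, colSub, Matrix.transpose_apply]

lemma gram_isUnit {M N : ℕ} (A : Matrix (Fin M) (Fin N) ℝ) (T : Finset (Fin N))
    (hinj : ∀ z : ↥T → ℝ, (colSub A T) *ᵥ z = 0 → z = 0) :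
    IsUnit ((colSub A T)ᵀ * colSub A T).det := by
  set C := colSub A T
  rw [isUnit_iff_ne_zero]
  intro hdet
  obtain ⟨v, hv0, hv⟩ := (Matrix.exists_mulVec_eq_zero_iff).mpr hdet
  have h1 : (C *ᵥ v) ⬝ᵥ (C *ᵥ v) = 0 := by
    rw [← dot_tA, Matrix.mulVec_mulVec, hv, dotProduct_zero]
  have h2 : C *ᵥ v = 0 := by
    apply nsq_eq_zero; rw [nsq_eq_dot]; exact h1
  exact hv0 (hinj v h2)

lemma normal_eq {M N : ℕ} (A : Matrix (Fin M) (Fin N) ℝ) (T : Finset (Fin N))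
    (xk x : Fin N → ℝ) (hAxk : A *ᵥ xk = A *ᵥ x)
    (hinj : ∀ z : ↥T → ℝ, (colSub A T) *ᵥ z = 0 → z = 0) :
    ∀ i ∈ T, (Aᵀ *ᵥ (A *ᵥ (x - feedback A T xk))) i = 0 := by
  set C := colSub A T with hC
  set G := Cᵀ * C with hG
  set r := A *ᵥ (restr Tᶜ xk) with hr
  have hGu : IsUnit G.det := gram_isUnit A T hinj
  have hfb : feedback A T xk = restr T xk + extT T ((G⁻¹ * Cᵀ) *ᵥ r) := by
    funext i
    by_cases h : i ∈ T <;> simp [feedback, restr, extT, h, ← hC, ← hG, ← hr]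
  have hkey : Cᵀ *ᵥ (A *ᵥ (x - feedback A T xk)) = 0 := by
    have hAfb : A *ᵥ feedback A T xk = A *ᵥ (restr T xk) + (C * (G⁻¹ * Cᵀ)) *ᵥ r := by
      rw [hfb, Matrix.mulVec_add, mulVec_extT, Matrix.mulVec_mulVec]
    have hCC : Cᵀ * (C * (G⁻¹ * Cᵀ)) = Cᵀ := by
      rw [← Matrix.mul_assoc, ← Matrix.mul_assoc, ← hG, Matrix.mul_nonsing_inv _ hGu,
        Matrix.one_mul]
    have hxk : restr T xk + restr Tᶜ xk = xk := by
      funext j; by_cases h : j ∈ T <;> simp [restr, h]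
    have hsplit : A *ᵥ xk = A *ᵥ (restr T xk) + r := by
      rw [hr, ← Matrix.mulVec_add, hxk]
    have hterm : Cᵀ *ᵥ ((C * (G⁻¹ * Cᵀ)) *ᵥ r) = Cᵀ *ᵥ r := by
      rw [Matrix.mulVec_mulVec, hCC]
    have hx' : A *ᵥ x = A *ᵥ (restr T xk) + r := by rw [← hAxk, hsplit]
    rw [Matrix.mulVec_sub, Matrix.mulVec_sub, hAfb, Matrix.mulVec_add, hterm, hx',
      Matrix.mulVec_add]
    abel
  intro i hi
  have := congrFun hkey ⟨i, hi⟩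
  rw [colSub_t_apply] at this
  exact this

lemma delta_step (δ U B p q : ℝ) (hδ0 : 0 ≤ δ) (hδ1 : δ < 1)
    (hU : 0 ≤ U) (hB : 0 ≤ B)
    (h1 : p ^ 2 ≤ (p - (1 - δ) * U) * (q - (1 - δ) * B))
    (h2 : p ^ 2 ≤ ((1 + δ) * U - p) * ((1 + δ) * B - q))
    (hpl : (1 - δ) * U ≤ p) (hpu : p ≤ (1 + δ) * U) :
    (1 - δ ^ 2) * U ≤ δ ^ 2 * B := by
  rcases eq_or_lt_of_le hpl with hp0 | hp
  · have hz : p - (1 - δ) * U = 0 := by linarith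
    have hpz : p ^ 2 ≤ 0 := by
      calc p ^ 2 ≤ (p - (1 - δ) * U) * (q - (1 - δ) * B) := h1
        _ = 0 := by rw [hz]; ring
    have hpe : p = 0 := by nlinarith [sq_nonneg p]
    have hU0 : U = 0 := by nlinarith
    nlinarith
  · have hppos : 0 < p := lt_of_le_of_lt (by nlinarith) hp
    rcases eq_or_lt_of_le hpu with hq0 | hq
    · have hz : (1 + δ) * U - p = 0 := by linarith
      have hpz : p ^ 2 ≤ 0 := by
        calc p ^ 2 ≤ ((1 + δ) * U - p) * ((1 + δ) * B - q) := h2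
          _ = 0 := by rw [hz]; ring
      nlinarith [sq_nonneg p]
    · have key1 : p ^ 2 * ((1 + δ) * U - p) ≤
          (p - (1 - δ) * U) * ((1 + δ) * U - p) * (q - (1 - δ) * B) := by
        nlinarith [h1, sub_pos.mpr hq]
      have key2 : p ^ 2 * (p - (1 - δ) * U) ≤
          ((1 + δ) * U - p) * (p - (1 - δ) * U) * ((1 + δ) * B - q) := by
        nlinarith [h2, sub_pos.mpr hp]
      have hsum : 2 * δ * U * p ^ 2 ≤
          (p - (1 - δ) * U) * ((1 + δ) * U - p) * (2 * δ * B) := by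
        nlinarith [key1, key2]
      have hsq : (1 - δ ^ 2) * ((p - (1 - δ) * U) * ((1 + δ) * U - p)) ≤
          δ ^ 2 * p ^ 2 := by
        nlinarith [sq_nonneg (p - (1 - δ ^ 2) * U)]
      rcases eq_or_lt_of_le hδ0 with hδz | hδpos
      · exfalso; subst hδz; linarith
      · have h5 : (1 - δ ^ 2) * U * (2 * δ * p ^ 2) ≤ δ ^ 2 * B * (2 * δ * p ^ 2) := by
          have hBpos : 0 ≤ 2 * δ * B := by positivity
          calc (1 - δ ^ 2) * U * (2 * δ * p ^ 2)
              = (1 - δ ^ 2) * (2 * δ * U * p ^ 2) := by ring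
            _ ≤ (1 - δ ^ 2) * ((p - (1 - δ) * U) * ((1 + δ) * U - p) * (2 * δ * B)) := by
                apply mul_le_mul_of_nonneg_left hsum (by nlinarith)
            _ = ((1 - δ ^ 2) * ((p - (1 - δ) * U) * ((1 + δ) * U - p))) * (2 * δ * B) := by
                ring
            _ ≤ (δ ^ 2 * p ^ 2) * (2 * δ * B) := mul_le_mul_of_nonneg_right hsq hBpos
            _ = δ ^ 2 * B * (2 * δ * p ^ 2) := by ring
        have hpos : 0 < 2 * δ * p ^ 2 := by positivity
        exact le_of_mul_le_mul_right h5 hpos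
lemma restr_dot {n : ℕ} (Θ : Finset (Fin n)) (w : Fin n → ℝ) :
    nsq (restr Θ w) = (restr Θ w) ⬝ᵥ w := by
  refine Finset.sum_congr rfl fun i _ => ?_
  by_cases h : i ∈ Θ <;> simp [restr, h, sq]

lemma restr_nsq_sum {n : ℕ} (Θ : Finset (Fin n)) (w : Fin n → ℝ) :
    nsq (restr Θ w) = ∑ j ∈ Θ, w j ^ 2 := by
  rw [nsq, ← Finset.sum_subset (Finset.subset_univ Θ)
    (fun j _ hj => by simp [restr, hj])]
  exact Finset.sum_congr rfl fun j hj => by simp [restr, hj]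

lemma key_estimate {M N : ℕ} (A : Matrix (Fin M) (Fin N) ℝ) (δ : ℝ)
    (hδ0 : 0 ≤ δ) (hδ1 : δ < 1) (u b : Fin N → ℝ)
    (hdisj : ∀ i, u i = 0 ∨ b i = 0)
    (hRIP : ∀ α : ℝ, (1 - δ) * nsq (α • u + b) ≤ nsq (A *ᵥ (α • u + b)) ∧
      nsq (A *ᵥ (α • u + b)) ≤ (1 + δ) * nsq (α • u + b))
    (hRIPu : (1 - δ) * nsq u ≤ nsq (A *ᵥ u) ∧ nsq (A *ᵥ u) ≤ (1 + δ) * nsq u)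
    (horth : (A *ᵥ u) ⬝ᵥ (A *ᵥ (u + b)) = 0) :
    (1 - δ ^ 2) * nsq (u + b) ≤ nsq b := by
  have hcross : (A *ᵥ u) ⬝ᵥ (A *ᵥ b) = -(nsq (A *ᵥ u)) := by
    have h := horth
    rw [Matrix.mulVec_add, dotProduct_add, ← nsq_eq_dot] at h
    linarith
  have hdecomp : ∀ α : ℝ, nsq (α • u + b) = α ^ 2 * nsq u + nsq b := by
    intro α
    unfold nsq
    rw [Finset.mul_sum, ← Finset.sum_add_distrib]
    refine Finset.sum_congr rfl fun i _ => ?_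
    rcases hdisj i with h | h <;> simp [h] <;> ring
  have hAdecomp : ∀ α : ℝ, nsq (A *ᵥ (α • u + b)) =
      α ^ 2 * nsq (A *ᵥ u) - 2 * α * nsq (A *ᵥ u) + nsq (A *ᵥ b) := by
    intro α
    rw [Matrix.mulVec_add, Matrix.mulVec_smul, nsq_add', nsq_smul,
      smul_dotProduct, hcross]
    simp [smul_eq_mul]; ring
  set U := nsq u
  set Bq := nsq b
  set p := nsq (A *ᵥ u)
  set q := nsq (A *ᵥ b)
  have h1 : p ^ 2 ≤ (p - (1 - δ) * U) * (q - (1 - δ) * Bq) := by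
    have hquad : ∀ α : ℝ, 0 ≤ (p - (1 - δ) * U) * (α * α) + (-(2 * p)) * α
        + (q - (1 - δ) * Bq) := by
      intro α
      have h := (hRIP α).1
      rw [hdecomp, hAdecomp] at h
      nlinarith [h]
    have hd := discrim_le_zero hquad
    rw [discrim] at hd
    nlinarith [hd]
  have h2 : p ^ 2 ≤ ((1 + δ) * U - p) * ((1 + δ) * Bq - q) := by
    have hquad : ∀ α : ℝ, 0 ≤ ((1 + δ) * U - p) * (α * α) + (2 * p) * α
        + ((1 + δ) * Bq - q) := by
      intro α
      have h := (hRIP α).2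
      rw [hdecomp, hAdecomp] at h
      nlinarith [h]
    have hd := discrim_le_zero hquad
    rw [discrim] at hd
    nlinarith [hd]
  have hmain := delta_step δ U Bq p q hδ0 hδ1 (nsq_nonneg u) (nsq_nonneg b)
    h1 h2 hRIPu.1 hRIPu.2
  have hsum : nsq (u + b) = U + Bq := by
    have := hdecomp 1
    simpa using this
  rw [hsum]
  nlinarith [nsq_nonneg b]

lemma gamma_step {M N : ℕ} (BM : Matrix (Fin M) (Fin N) ℝ) (γ : ℝ) (hγ0 : 0 ≤ γ)
    (hB : BM * BMᵀ = 1) (u e : Fin N → ℝ)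
    (hu : nsq u = u ⬝ᵥ (e - (BMᵀ * BM) *ᵥ e))
    (hsp : ∀ a c : ℝ, (1 - γ) * nsq (a • u + c • e) ≤ nsq (BM *ᵥ (a • u + c • e))) :
    nsq u ≤ γ ^ 2 * nsq e := by
  have hD : nsq u = u ⬝ᵥ e - (BM *ᵥ u) ⬝ᵥ (BM *ᵥ e) := by
    rw [hu, dotProduct_sub]
    congr 1
    rw [← Matrix.mulVec_mulVec, dot_tA]
  by_cases he : nsq e = 0
  · have he0 : e = 0 := nsq_eq_zero he
    rw [he0] at hD
    simp at hD
    rw [hD, he]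
    ring_nf
    simp
  by_cases hun : nsq u = 0
  · rw [hun]
    have := nsq_nonneg e
    positivity
  set a := Real.sqrt (nsq e) with hadef
  set c := Real.sqrt (nsq u) with hcdef
  have ha2 : a ^ 2 = nsq e := Real.sq_sqrt (nsq_nonneg e)
  have hc2 : c ^ 2 = nsq u := Real.sq_sqrt (nsq_nonneg u)
  have hapos : 0 < a := Real.sqrt_pos.mpr (lt_of_le_of_ne (nsq_nonneg e) (Ne.symm he))
  have hcpos : 0 < c := Real.sqrt_pos.mpr (lt_of_le_of_ne (nsq_nonneg u) (Ne.symm hun))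
  set X := u ⬝ᵥ e
  set Y := (BM *ᵥ u) ⬝ᵥ (BM *ᵥ e)
  set P := nsq (BM *ᵥ u)
  set Q := nsq (BM *ᵥ e)
  have hdot : ∀ t s : ℝ, (t • u) ⬝ᵥ (s • e) = t * s * X := by
    intro t s
    rw [smul_dotProduct, dotProduct_smul]
    simp [smul_eq_mul]; ring
  have hdotB : ∀ t s : ℝ, (t • (BM *ᵥ u)) ⬝ᵥ (s • (BM *ᵥ e)) = t * s * Y := by
    intro t s
    rw [smul_dotProduct, dotProduct_smul]
    simp [smul_eq_mul]; ring
  have hBlin : ∀ t s : ℝ, BM *ᵥ (t • u + s • e) = t • (BM *ᵥ u) + s • (BM *ᵥ e) := by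
    intro t s
    rw [Matrix.mulVec_add, Matrix.mulVec_smul, Matrix.mulVec_smul]
  have e1 := hsp a c
  have e2 := nsq_BtB_le BM hB (a • u + (-c) • e)
  rw [nsq_add', nsq_smul, nsq_smul, hdot, hBlin, nsq_add', nsq_smul, nsq_smul, hdotB]
    at e1
  rw [hBlin, nsq_add', nsq_smul, nsq_smul, hdotB, nsq_add', nsq_smul, nsq_smul, hdot]
    at e2
  have hCS : 2 * (a * c) * X ≤ 2 * a ^ 2 * c ^ 2 := by
    have h := cs_ineq u e
    rw [← hc2, ← ha2] at h
    nlinarith [sq_nonneg (X - a * c), mul_pos hapos hcpos]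
  -- 4ac(X - Y) ≤ γ (2a²c² + 2acX) ≤ 4γa²c² ; X - Y = nsq u = c²
  rw [← hc2, ← ha2] at e1 e2
  have hmain : 4 * (a * c) * (X - Y) ≤ γ * (4 * a ^ 2 * c ^ 2) := by
    have hγmul : γ * (2 * (a * c) * X) ≤ γ * (2 * a ^ 2 * c ^ 2) :=
      mul_le_mul_of_nonneg_left hCS hγ0
    nlinarith [e1, e2, hγmul]
  have hXY : X - Y = c ^ 2 := by rw [hc2, ← hD]
  rw [hXY] at hmain
  have hcle : c ≤ γ * a := by
    have hpos : 0 < 4 * (a * c) * c := by positivity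
    nlinarith [hmain]
  rw [← hc2, ← ha2]
  nlinarith [hcle, hcpos.le, hapos.le]
set_option maxHeartbeats 1600000
/-- improved convergence condition for NST+HT+FB (noiseless). -/
theorem stmt8 {M N : ℕ} (A : Matrix (Fin M) (Fin N) ℝ) (hpd : (A * Aᵀ).PosDef)
    (s : ℕ) (x : Fin N → ℝ) (y : Fin M → ℝ)
    (hy : y = A.mulVec x) (hx : Sparse s x)
    (T : ℕ → Finset (Fin N)) (xs μ : ℕ → Fin N → ℝ)
    (hspec : NSTSpec A y s T xs μ)
    (δ2s γ3s : ℝ) (h0δ : 0 ≤ δ2s) (h0γ : 0 ≤ γ3s)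
    (h2 : IsRIP A (2 * s) δ2s)
    (h3 : ∀ z : Fin N → ℝ, Sparse (3 * s) z →
      (1 - γ3s) * nsq z ≤ nsq ((psdSqrt hpd.inv.posSemidef * A).mulVec z))
    (hcond : δ2s ^ 2 + 2 * γ3s ^ 2 < 1) :
    ∀ k : ℕ, nrm (x - μ k) ≤
      Real.sqrt (2 * γ3s ^ 2 / (1 - δ2s ^ 2)) ^ k * nrm (x - μ 0) := by
  classical
  obtain ⟨hfeas, hTcard, hdom, hμdef, hit⟩ := hspec
  set Q := psdSqrt hpd.inv.posSemidef with hQdef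
  set B := Q * A with hBdef
  have hδ1 : δ2s < 1 := by nlinarith [sq_nonneg γ3s]
  have hγ1 : γ3s < 1 := by nlinarith [sq_nonneg δ2s]
  have hd2 : 0 < 1 - δ2s ^ 2 := by nlinarith [sq_nonneg γ3s]
  set S := suppF x with hSdef
  have hScard : S.card ≤ s := hx
  have hQsymm : Qᵀ = Q := by rw [hQdef]; exact Qsymm _ hpd
  have hQQ : Q * Q = (A * Aᵀ)⁻¹ := by rw [hQdef]; exact psdSqrt_mul_self hpd.inv.posSemidef
  have hBBt : B * Bᵀ = 1 := by
    have h1 : B * Bᵀ = Q * (A * Aᵀ) * Q := by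
      rw [hBdef, Matrix.transpose_mul, hQsymm]
      simp only [Matrix.mul_assoc]
    rw [h1, hQdef]
    exact QGQ _ hpd
  have hμsupp : ∀ k i, i ∉ T k → μ k i = 0 := by
    intro k i h; rw [hμdef k]; simp [feedback, h]
  have hesupp : ∀ k i, (x - μ k) i ≠ 0 → i ∈ S ∪ T k := by
    intro k i h
    by_contra hc
    simp only [Finset.mem_union, not_or] at hc
    have h1 : x i = 0 := suppF_zero hc.1
    have h2' : μ k i = 0 := hμsupp k i hc.2
    simp [Pi.sub_apply, h1, h2'] at h
  have hSTcard : ∀ k, (S ∪ T k).card ≤ 2 * s := by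
    intro k
    calc (S ∪ T k).card ≤ S.card + (T k).card := Finset.card_union_le _ _
      _ ≤ s + s := add_le_add hScard (le_of_eq (hTcard k))
      _ = 2 * s := by omega
  have hinj : ∀ k, ∀ z : ↥(T k) → ℝ, (colSub A (T k)) *ᵥ z = 0 → z = 0 := by
    intro k z hz
    have hext : A *ᵥ extT (T k) z = 0 := by rw [mulVec_extT, hz]
    have hsp3 : Sparse (3 * s) (extT (T k) z) := by
      apply sparse_of_subset (U := T k)
      · intro i hi
        by_contra hc
        simp [extT, hc] at hi
      · rw [hTcard k]; omega
    have hB0 : nsq (B *ᵥ extT (T k) z) = 0 := by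
      rw [hBdef, ← Matrix.mulVec_mulVec, hext, Matrix.mulVec_zero]
      simp [nsq]
    have h30 := h3 _ hsp3
    rw [hB0] at h30
    have hn0 : nsq (extT (T k) z) = 0 := by
      nlinarith [nsq_nonneg (extT (T k) z), h30]
    have hz0 := nsq_eq_zero hn0
    funext j
    have hj := congrFun hz0 ↑j
    simpa [extT, j.2] using hj
  have contraction : ∀ k, (1 - δ2s ^ 2) * nsq (x - μ (k + 1)) ≤
      2 * γ3s ^ 2 * nsq (x - μ k) := by
    intro k
    have hAe : y - A *ᵥ μ k = A *ᵥ (x - μ k) := by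
      rw [Matrix.mulVec_sub, hy]
    have hBtB : Bᵀ * B = Aᵀ * (A * Aᵀ)⁻¹ * A := by
      rw [hBdef, Matrix.transpose_mul, hQsymm, Matrix.mul_assoc Aᵀ Q (Q * A),
        ← Matrix.mul_assoc Q Q A, hQQ, ← Matrix.mul_assoc]
    have hw : x - xs (k + 1) = (x - μ k) - (Bᵀ * B) *ᵥ (x - μ k) := by
      rw [hit k, hAe, Matrix.mulVec_mulVec, ← hBtB, sub_add_eq_sub_sub]
    have hAx1 : A *ᵥ xs (k + 1) = A *ᵥ x := by rw [hfeas (k + 1), hy]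
    have hnm : ∀ i ∈ T (k + 1), (Aᵀ *ᵥ (A *ᵥ (x - μ (k + 1)))) i = 0 := by
      rw [hμdef (k + 1)]
      exact normal_eq A (T (k + 1)) (xs (k + 1)) x hAx1 (hinj (k + 1))
    have horth : (A *ᵥ restr (T (k + 1)) (x - μ (k + 1))) ⬝ᵥ
        (A *ᵥ (restr (T (k + 1)) (x - μ (k + 1)) + restr (T (k + 1))ᶜ (x - μ (k + 1)))) = 0 := by
      rw [restr_add_compl, ← dot_tA]
      simp only [dotProduct]
      apply Finset.sum_eq_zero
      intro i _
      by_cases hi : i ∈ T (k + 1)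
      · rw [hnm i hi, mul_zero]
      · simp [restr, hi]
    have hdisj : ∀ i, restr (T (k + 1)) (x - μ (k + 1)) i = 0 ∨
        restr (T (k + 1))ᶜ (x - μ (k + 1)) i = 0 := by
      intro i; by_cases hi : i ∈ T (k + 1)
      · right; simp [restr, hi]
      · left; simp [restr, hi]
    have hsupp2 : ∀ α : ℝ, Sparse (2 * s)
        (α • restr (T (k + 1)) (x - μ (k + 1)) + restr (T (k + 1))ᶜ (x - μ (k + 1))) := by
      intro α
      apply sparse_of_subset (U := S ∪ T (k + 1)) ?_ (hSTcard (k + 1))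
      intro i hi
      by_cases hiT : i ∈ T (k + 1)
      · exact Finset.mem_union_right _ hiT
      · have h1 : restr (T (k + 1)) (x - μ (k + 1)) i = 0 := by simp [restr, hiT]
        have h2' : restr (T (k + 1))ᶜ (x - μ (k + 1)) i ≠ 0 := by
          intro hc
          rw [Pi.add_apply, Pi.smul_apply, h1, hc] at hi
          simp at hi
        have h3' : (x - μ (k + 1)) i ≠ 0 := by
          intro hc; apply h2'; simp [restr, hc]
        exact hesupp (k + 1) i h3'
    have hsuppu : Sparse (2 * s) (restr (T (k + 1)) (x - μ (k + 1))) := by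
      apply sparse_of_subset (U := S ∪ T (k + 1)) ?_ (hSTcard (k + 1))
      intro i hi
      by_cases hiT : i ∈ T (k + 1)
      · exact Finset.mem_union_right _ hiT
      · exfalso; apply hi; simp [restr, hiT]
    have hkey := key_estimate A δ2s h0δ hδ1 _ _ hdisj
      (fun α => h2 _ (hsupp2 α)) (h2 _ hsuppu) horth
    rw [restr_add_compl] at hkey
    have hb_eq : nsq (restr (T (k + 1))ᶜ (x - μ (k + 1))) = ∑ j ∈ S \ T (k + 1), x j ^ 2 := by
      calc nsq (restr (T (k + 1))ᶜ (x - μ (k + 1)))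
          = ∑ j ∈ (T (k + 1))ᶜ, (x - μ (k + 1)) j ^ 2 := restr_nsq_sum _ _
        _ = ∑ j ∈ S \ T (k + 1), (x - μ (k + 1)) j ^ 2 := by
            refine (Finset.sum_subset ?_ ?_).symm
            · intro j hj
              exact Finset.mem_compl.mpr (Finset.mem_sdiff.mp hj).2
            · intro j hjc hj2
              have hjT : j ∉ T (k + 1) := Finset.mem_compl.mp hjc
              have hjS : j ∉ S := fun hs => hj2 (Finset.mem_sdiff.mpr ⟨hs, hjT⟩)
              rw [Pi.sub_apply, suppF_zero hjS, hμsupp (k + 1) j hjT, sub_zero]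
              norm_num
        _ = ∑ j ∈ S \ T (k + 1), x j ^ 2 := by
            refine Finset.sum_congr rfl fun j hj => ?_
            have hjT : j ∉ T (k + 1) := (Finset.mem_sdiff.mp hj).2
            rw [Pi.sub_apply, hμsupp (k + 1) j hjT, sub_zero]
    have hdouble : ∑ j ∈ S \ T (k + 1), x j ^ 2 ≤
        2 * ∑ j ∈ S \ T (k + 1), (x - xs (k + 1)) j ^ 2
        + 2 * ∑ j ∈ S \ T (k + 1), xs (k + 1) j ^ 2 := by
      rw [Finset.mul_sum, Finset.mul_sum, ← Finset.sum_add_distrib]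
      apply Finset.sum_le_sum
      intro j _
      have hxj : x j = (x - xs (k + 1)) j + xs (k + 1) j := by simp
      rw [hxj]
      nlinarith [sq_nonneg ((x - xs (k + 1)) j - xs (k + 1) j)]
    have hht : ∑ j ∈ S \ T (k + 1), xs (k + 1) j ^ 2 ≤
        ∑ j ∈ T (k + 1) \ S, xs (k + 1) j ^ 2 := by
      apply ht_lemma (xs (k + 1)) (T (k + 1)) S ?_ (hdom (k + 1))
      exact le_trans hScard (le_of_eq (hTcard (k + 1)).symm)
    have hTSw : ∑ j ∈ T (k + 1) \ S, xs (k + 1) j ^ 2 =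
        ∑ j ∈ T (k + 1) \ S, (x - xs (k + 1)) j ^ 2 := by
      refine Finset.sum_congr rfl fun j hj => ?_
      have hjS : j ∉ S := (Finset.mem_sdiff.mp hj).2
      rw [Pi.sub_apply, suppF_zero hjS]
      ring
    have hsym : ∑ j ∈ S \ T (k + 1), (x - xs (k + 1)) j ^ 2
        + ∑ j ∈ T (k + 1) \ S, (x - xs (k + 1)) j ^ 2
        ≤ nsq (restr (S ∪ T (k + 1)) (x - xs (k + 1))) := by
      rw [restr_nsq_sum, ← Finset.sum_union (by
        refine Finset.disjoint_left.mpr ?_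
        intro a ha hb
        exact (Finset.mem_sdiff.mp hb).2 (Finset.mem_sdiff.mp ha).1)]
      apply Finset.sum_le_sum_of_subset_of_nonneg ?_ (fun _ _ _ => sq_nonneg _)
      intro i hi
      rcases Finset.mem_union.mp hi with h | h
      · exact Finset.mem_union_left _ (Finset.mem_sdiff.mp h).1
      · exact Finset.mem_union_right _ (Finset.mem_sdiff.mp h).1
    have hγstep : nsq (restr (S ∪ T (k + 1)) (x - xs (k + 1))) ≤
        γ3s ^ 2 * nsq (x - μ k) := by
      apply gamma_step B γ3s h0γ hBBt _ _ ?_ ?_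
      · rw [← hw]
        exact restr_dot _ _
      · intro a c
        have hsp3 : Sparse (3 * s)
            (a • restr (S ∪ T (k + 1)) (x - xs (k + 1)) + c • (x - μ k)) := by
          apply sparse_of_subset (U := S ∪ T (k + 1) ∪ T k) ?_ ?_
          · intro i hi
            have hor : restr (S ∪ T (k + 1)) (x - xs (k + 1)) i ≠ 0 ∨ (x - μ k) i ≠ 0 := by
              by_contra hc
              push_neg at hc
              rw [Pi.add_apply, Pi.smul_apply, Pi.smul_apply, hc.1, hc.2] at hi
              simp at hi
            rcases hor with h | h
            · have : i ∈ S ∪ T (k + 1) := by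
                by_contra hc; exact h (by simp [restr, hc])
              exact Finset.mem_union_left _ this
            · rcases Finset.mem_union.mp (hesupp k i h) with h' | h'
              · exact Finset.mem_union_left _ (Finset.mem_union_left _ h')
              · exact Finset.mem_union_right _ h'
          · calc (S ∪ T (k + 1) ∪ T k).card
                ≤ (S ∪ T (k + 1)).card + (T k).card := Finset.card_union_le _ _
              _ ≤ 2 * s + s := add_le_add (hSTcard (k + 1)) (le_of_eq (hTcard k))
              _ = 3 * s := by omega
        exact h3 _ hsp3
    have hcomb : nsq (restr (T (k + 1))ᶜ (x - μ (k + 1))) ≤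
        2 * γ3s ^ 2 * nsq (x - μ k) := by
      rw [hb_eq]
      calc ∑ j ∈ S \ T (k + 1), x j ^ 2
          ≤ 2 * ∑ j ∈ S \ T (k + 1), (x - xs (k + 1)) j ^ 2
            + 2 * ∑ j ∈ S \ T (k + 1), xs (k + 1) j ^ 2 := hdouble
        _ ≤ 2 * ∑ j ∈ S \ T (k + 1), (x - xs (k + 1)) j ^ 2
            + 2 * ∑ j ∈ T (k + 1) \ S, (x - xs (k + 1)) j ^ 2 := by
            have h' := hht
            rw [hTSw] at h'
            linarith
        _ ≤ 2 * nsq (restr (S ∪ T (k + 1)) (x - xs (k + 1))) := by linarith [hsym]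
        _ ≤ 2 * (γ3s ^ 2 * nsq (x - μ k)) := by linarith [hγstep]
        _ = 2 * γ3s ^ 2 * nsq (x - μ k) := by ring
    linarith [hkey, hcomb]
  intro k
  induction k with
  | zero => simp
  | succ n ih =>
    have hc0 : (0:ℝ) ≤ 2 * γ3s ^ 2 / (1 - δ2s ^ 2) := by positivity
    have hstep : nrm (x - μ (n + 1)) ≤
        Real.sqrt (2 * γ3s ^ 2 / (1 - δ2s ^ 2)) * nrm (x - μ n) := by
      have h1 : nsq (x - μ (n + 1)) ≤ 2 * γ3s ^ 2 / (1 - δ2s ^ 2) * nsq (x - μ n) := by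
        rw [div_mul_eq_mul_div, le_div_iff₀ hd2]
        nlinarith [contraction n]
      show Real.sqrt (nsq (x - μ (n + 1))) ≤ _
      calc Real.sqrt (nsq (x - μ (n + 1)))
          ≤ Real.sqrt (2 * γ3s ^ 2 / (1 - δ2s ^ 2) * nsq (x - μ n)) :=
            Real.sqrt_le_sqrt h1
        _ = Real.sqrt (2 * γ3s ^ 2 / (1 - δ2s ^ 2)) * Real.sqrt (nsq (x - μ n)) :=
            Real.sqrt_mul hc0 _
    calc nrm (x - μ (n + 1))
        ≤ Real.sqrt (2 * γ3s ^ 2 / (1 - δ2s ^ 2)) * nrm (x - μ n) := hstep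
      _ ≤ Real.sqrt (2 * γ3s ^ 2 / (1 - δ2s ^ 2)) *
          (Real.sqrt (2 * γ3s ^ 2 / (1 - δ2s ^ 2)) ^ n * nrm (x - μ 0)) :=
          mul_le_mul_of_nonneg_left ih (Real.sqrt_nonneg _)
      _ = Real.sqrt (2 * γ3s ^ 2 / (1 - δ2s ^ 2)) ^ (n + 1) * nrm (x - μ 0) := by ring
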